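/- Suppose the conditional label-flipping probability η: ℝ^d → [0, 1/2] satisfies ℙ(η(x) ≥ 1/2 - t) ≤ A·t^{α/(1-α)} for all t ∈ [0, 1/2], with A > 0 and α ∈ (0,1). Then E[η(x)] ≤ 1/2 - α·(1/A)^{(1-α)/α}. -/

import Mathlib

open Real MeasureTheory

/-- Under the (A,α)-Tsybakov noise condition, the Bayes error E[η(x)] is at most
1/2 - α·(1/A)^{(1-α)/α}. -/
theorem bayes_error_bound {Ω : Type*} [MeasurableSpace Ω] (μ : Measure Ω)
    [IsProbabilityMeasure μ] (η : Ω → ℝ) (hmeas : Measurable η)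
    (hrange : ∀ ω, η ω ∈ Set.Icc (0 : ℝ) (1 / 2))
    (A α : ℝ) (hA : 0 < A) (hα : α ∈ Set.Ioo (0 : ℝ) 1)
    (h : ∀ t ∈ Set.Icc (0 : ℝ) (1 / 2),
      μ {ω | 1 / 2 - t ≤ η ω} ≤ ENNReal.ofReal (A * t ^ (α / (1 - α)))) :
    ∫ ω, η ω ∂μ ≤ 1 / 2 - α * (1 / A) ^ ((1 - α) / α) := by
  obtain ⟨hα0, hα1⟩ := hα
  set β : ℝ := α / (1 - α) with hβdef
  have h1α : (0:ℝ) < 1 - α := by linarith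
  have hβ : 0 < β := div_pos hα0 h1α
  set t₀ : ℝ := (1 / A) ^ ((1 - α) / α) with ht₀def
  have ht₀pos : 0 < t₀ := Real.rpow_pos_of_pos (by positivity) _
  have ht₀β : t₀ ^ β = 1 / A := by
    rw [ht₀def, ← Real.rpow_mul (by positivity)]
    have : (1 - α) / α * β = 1 := by
      simp only [hβdef]; field_simp
    rw [this, Real.rpow_one]
  -- t₀ ≤ 1/2
  have ht₀half : t₀ ≤ 1 / 2 := by
    have h12 := h (1/2) ⟨by norm_num, le_refl _⟩
    have huniv : {ω | 1/2 - 1/2 ≤ η ω} = Set.univ := by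
      ext ω; simp [(hrange ω).1]
    rw [huniv, measure_univ] at h12
    have hge : 1 ≤ A * (1/2 : ℝ) ^ β := ENNReal.one_le_ofReal.mp h12
    have hpow : t₀ ^ β ≤ (1/2 : ℝ) ^ β := by
      rw [ht₀β, div_le_iff₀ hA]
      linarith [hge]
    by_contra hc
    push_neg at hc
    exact absurd (Real.rpow_lt_rpow (by norm_num) hc hβ) (not_lt.mpr hpow)
  set Z : Ω → ℝ := fun ω => 1/2 - η ω with hZdef
  have hZnn : ∀ ω, 0 ≤ Z ω := fun ω => by
    have := (hrange ω).2; simp [hZdef]; linarith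
  have hZbd : ∀ ω, Z ω ≤ 1/2 := fun ω => by
    have := (hrange ω).1; simp [hZdef]; linarith
  have hηint : Integrable η μ := by
    refine Integrable.mono' (integrable_const (1/2 : ℝ)) hmeas.aestronglyMeasurable ?_
    filter_upwards with ω
    rw [Real.norm_eq_abs, abs_le]
    exact ⟨by linarith [(hrange ω).1], (hrange ω).2⟩
  have hZint : Integrable Z μ := (integrable_const (1/2 : ℝ)).sub hηint
  -- layer cake
  have hlc := hZint.integral_eq_integral_Ioc_meas_le (M := 1/2)
    (Filter.Eventually.of_forall hZnn) (Filter.Eventually.of_forall hZbd)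
  -- the tail function
  set g : ℝ → ℝ := fun t => (μ {a | t ≤ Z a}).toReal with hgdef
  have hganti : Antitone g := by
    intro s t hst
    apply ENNReal.toReal_mono (measure_ne_top μ _)
    exact measure_mono (fun a ha => le_trans hst ha)
  have hgmeas : Measurable g := hganti.measurable
  have hgnn : ∀ t, 0 ≤ g t := fun t => ENNReal.toReal_nonneg
  have hgbd : ∀ t, g t ≤ 1 := fun t => by
    simp only [hgdef]
    have := prob_le_one (μ := μ) (s := {a | t ≤ Z a})
    exact ENNReal.toReal_le_of_le_ofReal (by norm_num) (by simpa using this)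
  have hgint : ∀ s : Set ℝ, MeasurableSet s → volume s < ⊤ → IntegrableOn g s := by
    intro s hs hfin
    refine Integrable.mono' (integrableOn_const (C := (1:ℝ)) hfin.ne) hgmeas.aestronglyMeasurable ?_
    filter_upwards with t
    rw [Real.norm_eq_abs, abs_of_nonneg (hgnn t)]
    exact hgbd t
  -- pointwise lower bound on Ioc 0 t₀
  have hptwise : ∀ t ∈ Set.Ioc (0:ℝ) t₀, 1 - A * t ^ β ≤ g t := by
    intro t ht
    have ht1 : t ∈ Set.Icc (0:ℝ) (1/2) := ⟨le_of_lt ht.1, le_trans ht.2 ht₀half⟩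
    have hcompl : {a | t ≤ Z a}ᶜ ⊆ {ω | 1/2 - t ≤ η ω} := by
      intro a ha
      simp only [Set.mem_compl_iff, Set.mem_setOf_eq, not_le, hZdef] at ha ⊢
      linarith
    have hμc : μ {a | t ≤ Z a}ᶜ ≤ ENNReal.ofReal (A * t ^ β) :=
      le_trans (measure_mono hcompl) (h t ht1)
    have hmsble : MeasurableSet {a | t ≤ Z a} := by
      apply measurableSet_le measurable_const
      exact (measurable_const.sub hmeas)
    have hμ : μ {a | t ≤ Z a} = 1 - μ {a | t ≤ Z a}ᶜ := by
      conv_lhs => rw [← compl_compl {a | t ≤ Z a}]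
      exact prob_compl_eq_one_sub hmsble.compl
    have hcr : (μ {a | t ≤ Z a}ᶜ).toReal ≤ A * t ^ β :=
      ENNReal.toReal_le_of_le_ofReal
        (mul_nonneg hA.le (Real.rpow_nonneg ht.1.le _)) hμc
    calc 1 - A * t ^ β ≤ 1 - (μ {a | t ≤ Z a}ᶜ).toReal := by linarith
      _ = g t := by
          rw [hgdef]
          simp only
          rw [hμ, ENNReal.toReal_sub_of_le prob_le_one ENNReal.one_ne_top]
          simp
  -- integral comparison
  have hstep1 : ∫ t in Set.Ioc 0 t₀, (1 - A * t ^ β) ≤ ∫ t in Set.Ioc 0 t₀, g t := by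
    apply setIntegral_mono_on
    · have : IntegrableOn (fun t => 1 - A * t ^ β) (Set.Ioc (0:ℝ) t₀) := by
        apply Integrable.sub (integrableOn_const (s := Set.Ioc (0:ℝ) t₀) (μ := volume) (C := (1:ℝ)) (by simp))
        apply Integrable.const_mul
        have : IntervalIntegrable (fun t : ℝ => t ^ β) volume 0 t₀ :=
          intervalIntegral.intervalIntegrable_rpow (by left; positivity)
        have := this.1
        exact (by simpa using this : IntegrableOn (fun t : ℝ => t ^ β) (Set.Ioc 0 t₀) volume)
      exact this
    · exact hgint _ measurableSet_Ioc (by simp)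
    · exact measurableSet_Ioc
    · exact hptwise
  have hstep2 : ∫ t in Set.Ioc 0 t₀, g t ≤ ∫ t in Set.Ioc 0 (1/2 : ℝ), g t := by
    apply setIntegral_mono_set (hgint _ measurableSet_Ioc (by simp))
    · exact Filter.Eventually.of_forall hgnn
    · exact HasSubset.Subset.eventuallyLE (Set.Ioc_subset_Ioc_right ht₀half)
  -- compute the explicit integral
  have hcomp : ∫ t in Set.Ioc 0 t₀, (1 - A * t ^ β) = α * t₀ := by
    rw [← intervalIntegral.integral_of_le (le_of_lt ht₀pos)]
    have hi1 : IntervalIntegrable (fun _ : ℝ => (1:ℝ)) volume 0 t₀ :=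
      intervalIntegrable_const
    have hi2 : IntervalIntegrable (fun t : ℝ => A * t ^ β) volume 0 t₀ :=
      (intervalIntegral.intervalIntegrable_rpow (by left; positivity)).const_mul A
    rw [intervalIntegral.integral_sub hi1 hi2, intervalIntegral.integral_const,
      intervalIntegral.integral_const_mul, integral_rpow (Or.inl (by linarith : (-1:ℝ) < β))]
    have h0 : (0:ℝ) ^ (β + 1) = 0 := Real.zero_rpow (by positivity)
    have ht₀β1 : t₀ ^ (β + 1) = t₀ * (1/A) := by
      rw [Real.rpow_add ht₀pos, ht₀β, Real.rpow_one, mul_comm]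
    have hβ1 : β + 1 = 1 / (1 - α) := by simp only [hβdef]; field_simp; ring
    rw [h0, ht₀β1, hβ1]
    field_simp
    ring
  -- put it together
  have hZbound : α * t₀ ≤ ∫ ω, Z ω ∂μ := by
    rw [hlc, ← hcomp]
    exact le_trans hstep1 hstep2
  have hZval : ∫ ω, Z ω ∂μ = 1/2 - ∫ ω, η ω ∂μ := by
    rw [hZdef]
    rw [integral_sub (integrable_const _) hηint]
    simp
  rw [hZval] at hZbound
  linarith
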